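/- Let A be a commutative ring which is an ℝ-algebra, let I₀ be an imaginary unit and let f, g ∈ Quaternion A. The following are equivalent: (i) f * g is I₀-sliced; (ii) ⟨f, ι(M₀) * star g⟩ = 0 for every imaginary unit M₀ whose vector part is orthogonal to that of I₀ in ℝ³; (iii) ⟨star f, g * ι(M₀)⟩ = 0 for every imaginary unit M₀ whose vector part is orthogonal to that of I₀ in ℝ³. (Proposition 4.5.) -/

import Mathlib

open Quaternion

/-- The componentwise extension `ι : ℍ[ℝ] → ℍ[A]` of `algebraMap ℝ A`. -/
noncomputable def qmap {A : Type*} [CommRing A] [Algebra ℝ A] (q : Quaternion ℝ) :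
    Quaternion A :=
  ⟨algebraMap ℝ A q.re, algebraMap ℝ A q.imI, algebraMap ℝ A q.imJ, algebraMap ℝ A q.imK⟩

/-- An imaginary unit: a real quaternion with zero real part squaring to `-1`. -/
def IsImaginaryUnit (I : Quaternion ℝ) : Prop := I.re = 0 ∧ I ^ 2 = -1

/-- `q` is `I`-sliced if `q = a + b·ι(I)` for some `a, b ∈ A`. -/
noncomputable def IsSliced {A : Type*} [CommRing A] [Algebra ℝ A]
    (I : Quaternion ℝ) (q : Quaternion A) : Prop :=
  ∃ a b : A, q = (a : Quaternion A) + (b : Quaternion A) * qmap I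

/-- The vector parts of `I` and `M` are orthogonal in `ℝ³`. -/
def OrthIm (I M : Quaternion ℝ) : Prop :=
  I.imI * M.imI + I.imJ * M.imJ + I.imK * M.imK = 0

/-- The pairing `⟨u,v⟩_*`: the scalar part of `u * star v`. -/
def pairStar {A : Type*} [CommRing A] (u v : Quaternion A) : A := (u * star v).re

section Aux
variable {A : Type*} [CommRing A] [Algebra ℝ A]

lemma qmap_re (m : Quaternion ℝ) : (qmap (A := A) m).re = algebraMap ℝ A m.re := rfl
lemma qmap_imI (m : Quaternion ℝ) : (qmap (A := A) m).imI = algebraMap ℝ A m.imI := rfl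
lemma qmap_imJ (m : Quaternion ℝ) : (qmap (A := A) m).imJ = algebraMap ℝ A m.imJ := rfl
lemma qmap_imK (m : Quaternion ℝ) : (qmap (A := A) m).imK = algebraMap ℝ A m.imK := rfl

omit [Algebra ℝ A] in
lemma re_mul_comm (x y : Quaternion A) : (x * y).re = (y * x).re := by
  simp only [Quaternion.re_mul]; ring

lemma star_qmap (m : Quaternion ℝ) (hm : m.re = 0) :
    star (qmap (A := A) m) = - qmap m := by
  ext <;> simp [qmap_re, qmap_imI, qmap_imJ, qmap_imK, hm]

lemma pair1 (f g : Quaternion A) (M : Quaternion ℝ) (hM : M.re = 0) :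
    pairStar f (qmap M * star g) = -((f * g) * qmap M).re := by
  unfold pairStar
  rw [star_mul, star_star, star_qmap M hM]
  simp [mul_assoc]

lemma pair2 (f g : Quaternion A) (M : Quaternion ℝ) :
    pairStar (star f) (g * qmap M) = ((f * g) * qmap M).re := by
  unfold pairStar
  rw [← star_mul, Quaternion.re_star, re_mul_comm, mul_assoc]

lemma sliced_iff (I₀ : Quaternion ℝ) (hI : IsImaginaryUnit I₀) (h : Quaternion A) :
    IsSliced I₀ h ↔
      ∀ M : Quaternion ℝ, IsImaginaryUnit M → OrthIm I₀ M → ((h * qmap M).re = 0) := by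
  constructor
  · rintro ⟨a, b, rfl⟩ M hM hO
    have h0 : algebraMap ℝ A (I₀.imI * M.imI + I₀.imJ * M.imJ + I₀.imK * M.imK)
        = algebraMap ℝ A 0 := congrArg _ hO
    simp only [map_add, map_mul, map_zero] at h0
    rw [Quaternion.re_mul]
    simp [qmap_re, qmap_imI, qmap_imJ, qmap_imK, Quaternion.re_mul, Quaternion.imI_mul, Quaternion.imJ_mul, Quaternion.imK_mul,
      hM.1, hI.1]
    linear_combination (-b) * h0
  · intro C
    obtain ⟨hre, hsq⟩ := hI
    have hn : I₀.imI ^ 2 + I₀.imJ ^ 2 + I₀.imK ^ 2 = 1 := by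
      have := congrArg QuaternionAlgebra.re hsq
      simp [pow_two, Quaternion.re_mul, hre] at this
      nlinarith [this]
    -- extension of the orthogonality condition to all pure orthogonal vectors
    have E : ∀ m : Quaternion ℝ, m.re = 0 → OrthIm I₀ m →
        algebraMap ℝ A m.imI * h.imI + algebraMap ℝ A m.imJ * h.imJ
          + algebraMap ℝ A m.imK * h.imK = 0 := by
      intro m hm ho
      by_cases hs : m.imI ^ 2 + m.imJ ^ 2 + m.imK ^ 2 = 0
      · have h1 : m.imI = 0 := by nlinarith [sq_nonneg m.imI, sq_nonneg m.imJ, sq_nonneg m.imK]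
        have h2 : m.imJ = 0 := by nlinarith [sq_nonneg m.imI, sq_nonneg m.imJ, sq_nonneg m.imK]
        have h3 : m.imK = 0 := by nlinarith [sq_nonneg m.imI, sq_nonneg m.imJ, sq_nonneg m.imK]
        simp [h1, h2, h3]
      · have hs' : 0 < m.imI ^ 2 + m.imJ ^ 2 + m.imK ^ 2 :=
          lt_of_le_of_ne (by positivity) (Ne.symm hs)
        set r := Real.sqrt (m.imI ^ 2 + m.imJ ^ 2 + m.imK ^ 2) with hrdef
        have hr : 0 < r := Real.sqrt_pos.2 hs'
        have hr2 : r ^ 2 = m.imI ^ 2 + m.imJ ^ 2 + m.imK ^ 2 := Real.sq_sqrt hs'.le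
        set M : Quaternion ℝ := ⟨0, m.imI / r, m.imJ / r, m.imK / r⟩ with hMdef
        have hone : m.imI / r * (m.imI / r) + m.imJ / r * (m.imJ / r)
            + m.imK / r * (m.imK / r) = 1 := by
          field_simp
          nlinarith [hr2]
        have hMi : IsImaginaryUnit M := by
          refine ⟨rfl, ?_⟩
          ext
          · simp only [pow_two, Quaternion.re_mul]; simp only [hMdef, Quaternion.re_neg, Quaternion.re_one]
            linarith [hone]
          · simp only [pow_two, Quaternion.imI_mul]; simp only [hMdef, Quaternion.imI_neg, Quaternion.imI_one]; ring
          · simp only [pow_two, Quaternion.imJ_mul]; simp only [hMdef, Quaternion.imJ_neg, Quaternion.imJ_one]; ring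
          · simp only [pow_two, Quaternion.imK_mul]; simp only [hMdef, Quaternion.imK_neg, Quaternion.imK_one]; ring
        have hMo : OrthIm I₀ M := by
          unfold OrthIm at ho ⊢
          simp only [hMdef]
          field_simp
          linear_combination ho
        have hC := C M hMi hMo
        rw [Quaternion.re_mul] at hC
        simp only [qmap_re, qmap_imI, qmap_imJ, qmap_imK] at hC
        simp [hMdef] at hC
        have k1 : algebraMap ℝ A m.imI = algebraMap ℝ A r * algebraMap ℝ A (m.imI / r) := by
          rw [← map_mul]; congr 1; field_simp
        have k2 : algebraMap ℝ A m.imJ = algebraMap ℝ A r * algebraMap ℝ A (m.imJ / r) := by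
          rw [← map_mul]; congr 1; field_simp
        have k3 : algebraMap ℝ A m.imK = algebraMap ℝ A r * algebraMap ℝ A (m.imK / r) := by
          rw [← map_mul]; congr 1; field_simp
        rw [k1, k2, k3]
        linear_combination (- (algebraMap ℝ A r)) * hC
    set b₀ : A := algebraMap ℝ A I₀.imI * h.imI + algebraMap ℝ A I₀.imJ * h.imJ
      + algebraMap ℝ A I₀.imK * h.imK with hb
    refine ⟨h.re, b₀, ?_⟩
    have E1 := E ⟨0, 1 - I₀.imI * I₀.imI, -(I₀.imI * I₀.imJ), -(I₀.imI * I₀.imK)⟩ rfl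
      (by unfold OrthIm; simp only; linear_combination (-I₀.imI) * hn)
    have E2 := E ⟨0, -(I₀.imJ * I₀.imI), 1 - I₀.imJ * I₀.imJ, -(I₀.imJ * I₀.imK)⟩ rfl
      (by unfold OrthIm; simp only; linear_combination (-I₀.imJ) * hn)
    have E3 := E ⟨0, -(I₀.imK * I₀.imI), -(I₀.imK * I₀.imJ), 1 - I₀.imK * I₀.imK⟩ rfl
      (by unfold OrthIm; simp only; linear_combination (-I₀.imK) * hn)
    simp only [map_sub, map_mul, map_neg, map_one] at E1 E2 E3
    have c1 : h.imI = b₀ * algebraMap ℝ A I₀.imI := by rw [hb]; linear_combination E1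
    have c2 : h.imJ = b₀ * algebraMap ℝ A I₀.imJ := by rw [hb]; linear_combination E2
    have c3 : h.imK = b₀ * algebraMap ℝ A I₀.imK := by rw [hb]; linear_combination E3
    ext
    · simp [qmap_re, qmap_imI, qmap_imJ, qmap_imK, Quaternion.re_mul, hre]
    · simp [qmap_re, qmap_imI, qmap_imJ, qmap_imK, Quaternion.imI_mul, c1]
    · simp [qmap_re, qmap_imI, qmap_imJ, qmap_imK, Quaternion.imJ_mul, c2]
    · simp [qmap_re, qmap_imI, qmap_imJ, qmap_imK, Quaternion.imK_mul, c3]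

end Aux

theorem product_sliced_iff_orthogonality_relations {A : Type*} [CommRing A] [Algebra ℝ A]
    (I₀ : Quaternion ℝ) (hI₀ : IsImaginaryUnit I₀) (f g : Quaternion A) :
    List.TFAE
      [IsSliced I₀ (f * g),
       ∀ M₀ : Quaternion ℝ, IsImaginaryUnit M₀ → OrthIm I₀ M₀ →
         pairStar f (qmap M₀ * star g) = 0,
       ∀ M₀ : Quaternion ℝ, IsImaginaryUnit M₀ → OrthIm I₀ M₀ →
         pairStar (star f) (g * qmap M₀) = 0] := by
  tfae_have 1 ↔ 2 := by
    rw [sliced_iff I₀ hI₀]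
    refine forall_congr' fun M => forall_congr' fun hM => forall_congr' fun hO => ?_
    rw [pair1 f g M hM.1, neg_eq_zero]
  tfae_have 1 ↔ 3 := by
    rw [sliced_iff I₀ hI₀]
    refine forall_congr' fun M => forall_congr' fun hM => forall_congr' fun hO => ?_
    rw [pair2 f g M]
  tfae_finish
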